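/- For every μ ∈ Δ(S) and every M ∈ ℕ with M ≥ 1, the set T_{M,μ} of Borel probability measures on Δ(S) with barycenter μ whose support has at most M points is compact in the topology of weak convergence of measures. -/

import Mathlib

open MeasureTheory
open scoped ENNReal

section Aux

variable {S : Type*} [Fintype S] [Nonempty S]

lemma integrable_dirac_cont {α : Type*} [MeasurableSpace α] [TopologicalSpace α]
    [OpensMeasurableSpace α] {f : α → ℝ} (hf : Continuous f) (a : α) :
    Integrable f (Measure.dirac a) := by
  refine ⟨hf.aestronglyMeasurable, ?_⟩
  have : (∫⁻ x, ‖f x‖₊ ∂(Measure.dirac a)) = ‖f a‖₊ :=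
    lintegral_dirac' a (hf.measurable.nnnorm.coe_nnreal_ennreal)
  rw [HasFiniteIntegral]
  simp only [enorm_eq_nnnorm]
  rw [this]
  exact ENNReal.coe_lt_top

/-- The map sending weights and points to the corresponding discrete probability measure. -/
noncomputable def phiTM (M : ℕ) (_hM : 1 ≤ M)
    (p : stdSimplex ℝ (Fin M) × (Fin M → stdSimplex ℝ S)) :
    ProbabilityMeasure (stdSimplex ℝ S) := by
  refine ⟨∑ i : Fin M, ENNReal.ofReal ((p.1 : Fin M → ℝ) i) • Measure.dirac (p.2 i), ?_⟩
  constructor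
  rw [Measure.finset_sum_apply]
  simp only [Measure.smul_apply, smul_eq_mul, Measure.dirac_apply' _ MeasurableSet.univ,
    Set.indicator_univ, Pi.one_apply, mul_one]
  rw [← ENNReal.ofReal_sum_of_nonneg (fun i _ => (show 0 ≤ p.1 i from p.1.2.1 i)), (show ∑ i, p.1 i = 1 from p.1.2.2), ENNReal.ofReal_one]

lemma integral_phiTM (M : ℕ) (hM : 1 ≤ M)
    (p : stdSimplex ℝ (Fin M) × (Fin M → stdSimplex ℝ S))
    {f : stdSimplex ℝ S → ℝ} (hf : Continuous f) :
    ∫ ν, f ν ∂(phiTM M hM p : Measure (stdSimplex ℝ S))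
      = ∑ i : Fin M, (p.1 : Fin M → ℝ) i * f (p.2 i) := by
  have hfi : ∀ i : Fin M,
      Integrable f (ENNReal.ofReal ((p.1 : Fin M → ℝ) i) • Measure.dirac (p.2 i)) :=
    fun i => (integrable_dirac_cont hf (p.2 i)).smul_measure ENNReal.ofReal_ne_top
  show ∫ ν, f ν ∂(∑ i : Fin M, ENNReal.ofReal ((p.1 : Fin M → ℝ) i) • Measure.dirac (p.2 i)) = _
  rw [integral_finset_sum_measure fun i _ => hfi i]
  refine Finset.sum_congr rfl fun i _ => ?_
  rw [integral_smul_measure, integral_dirac, ENNReal.toReal_ofReal (show 0 ≤ p.1 i from p.1.2.1 i), smul_eq_mul]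

lemma continuous_phiTM (M : ℕ) (hM : 1 ≤ M) : Continuous (phiTM (S := S) M hM) := by
  rw [continuous_iff_continuousAt]
  intro p
  have key : ∀ (f : BoundedContinuousFunction (stdSimplex ℝ S) ℝ) (q : stdSimplex ℝ (Fin M) × (Fin M → stdSimplex ℝ S)),
      ∫ ν, f ν ∂(phiTM M hM q : Measure (stdSimplex ℝ S))
        = ∑ i : Fin M, (q.1 : Fin M → ℝ) i * f (q.2 i) :=
    fun f q => integral_phiTM M hM q f.continuous
  unfold ContinuousAt
  rw [ProbabilityMeasure.tendsto_iff_forall_integral_tendsto]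
  intro f
  simp only [key f]
  have hc : Continuous fun q : stdSimplex ℝ (Fin M) × (Fin M → stdSimplex ℝ S) =>
      ∑ i : Fin M, (q.1 : Fin M → ℝ) i * f (q.2 i) := by
    refine continuous_finset_sum _ fun i _ => Continuous.mul ?_ ?_
    · exact (continuous_apply i).comp (continuous_subtype_val.comp continuous_fst)
    · exact f.continuous.comp ((continuous_apply i).comp continuous_snd)
  exact hc.continuousAt

lemma measure_finset_eq_sum (τ : Measure (stdSimplex ℝ S)) (F : Finset (stdSimplex ℝ S)) :
    τ (↑F) = ∑ a ∈ F, τ {a} := by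
  have h : (↑F : Set (stdSimplex ℝ S)) = ⋃ a ∈ F, {a} := by
    exact (Set.biUnion_of_singleton (↑F : Set (stdSimplex ℝ S))).symm
  rw [h, measure_biUnion_finset]
  · intro a _ b _ hab
    simp only [Set.disjoint_singleton, ne_eq]
    exact hab
  · exact fun a _ => measurableSet_singleton a

end Aux

/-- For every `μ ∈ Δ(S)` and every `M ≥ 1`, the set `T_{M,μ}` of Borel
probability measures on the simplex `Δ(S)` with barycenter `μ` whose support has at most `M`
points (i.e. all the mass sits on a finite set of at most `M` points) is compact in the
topology of weak convergence. -/
theorem compact_TMmu {S : Type*} [Fintype S] [Nonempty S] (μ : stdSimplex ℝ S)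
    (M : ℕ) (hM : 1 ≤ M) :
    IsCompact {τ : ProbabilityMeasure (stdSimplex ℝ S) |
      (∀ s : S, (∫ ν, (ν : S → ℝ) s ∂(τ : Measure (stdSimplex ℝ S))) = (μ : S → ℝ) s) ∧
      ∃ F : Finset (stdSimplex ℝ S), F.card ≤ M ∧
        (τ : Measure (stdSimplex ℝ S)) (↑F) = 1} := by
  classical
  set K : Set (stdSimplex ℝ (Fin M) × (Fin M → stdSimplex ℝ S)) :=
    {p | ∀ s : S, ∑ i : Fin M, (p.1 : Fin M → ℝ) i * (p.2 i : S → ℝ) s = (μ : S → ℝ) s} with hK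
  have hKcompact : IsCompact K := by
    refine IsClosed.isCompact ?_
    have hKe : K = ⋂ s : S, {p : stdSimplex ℝ (Fin M) × (Fin M → stdSimplex ℝ S) |
        ∑ i : Fin M, (p.1 : Fin M → ℝ) i * (p.2 i : S → ℝ) s = (μ : S → ℝ) s} := by
      ext p; simp [hK, Set.mem_iInter]
    rw [hKe]
    refine isClosed_iInter fun s => isClosed_eq ?_ continuous_const
    refine continuous_finset_sum _ fun i _ => Continuous.mul ?_ ?_
    · exact (continuous_apply i).comp (continuous_subtype_val.comp continuous_fst)
    · exact (continuous_apply s).comp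
        (continuous_subtype_val.comp ((continuous_apply i).comp continuous_snd))
  have himage : {τ : ProbabilityMeasure (stdSimplex ℝ S) |
      (∀ s : S, (∫ ν, (ν : S → ℝ) s ∂(τ : Measure (stdSimplex ℝ S))) = (μ : S → ℝ) s) ∧
      ∃ F : Finset (stdSimplex ℝ S), F.card ≤ M ∧
        (τ : Measure (stdSimplex ℝ S)) (↑F) = 1} = phiTM M hM '' K := by
    ext τ
    constructor
    · rintro ⟨hbar, F, hcard, hF⟩
      have hFne : F.Nonempty := by
        rcases F.eq_empty_or_nonempty with h | h
        · exfalso; rw [h] at hF; simp at hF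
        · exact h
      obtain ⟨y0, hy0⟩ := hFne
      set k := F.card with hk
      set e : {a // a ∈ F} ≃ Fin k := F.equivFin with he
      set x : Fin M → stdSimplex ℝ S :=
        fun i => if h : (i : ℕ) < k then (e.symm ⟨(i : ℕ), h⟩ : stdSimplex ℝ S) else y0 with hx
      set w : Fin M → ℝ := fun i =>
        if (i : ℕ) < k then ((τ : Measure (stdSimplex ℝ S)) {x i}).toReal else 0 with hw
      set j : stdSimplex ℝ S → Fin M := fun a =>
        if ha : a ∈ F then (⟨((e ⟨a, ha⟩ : Fin k) : ℕ),
          lt_of_lt_of_le (e ⟨a, ha⟩).2 hcard⟩ : Fin M) else ⟨0, hM⟩ with hj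
      have hxF : ∀ (i : Fin M) (h : (i : ℕ) < k), x i ∈ F := by
        intro i h
        rw [hx]; simp only [h, dif_pos]
        exact (e.symm ⟨(i : ℕ), h⟩).2
      have hjx : ∀ a (ha : a ∈ F), x (j a) = a := by
        intro a ha
        have h1 : ((j a : Fin M) : ℕ) = ((e ⟨a, ha⟩ : Fin k) : ℕ) := by
          rw [hj]; simp [ha]
        have h2 : ((j a : Fin M) : ℕ) < k := h1 ▸ (e ⟨a, ha⟩).2
        rw [hx]
        simp only [h2, dif_pos]
        have h3 : (⟨((j a : Fin M) : ℕ), h2⟩ : Fin k) = e ⟨a, ha⟩ := by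
          apply Fin.ext; simpa using h1
        rw [h3, Equiv.symm_apply_apply]
      have hbij : ∀ {β : Type} [AddCommMonoid β] (g : stdSimplex ℝ S → β),
          (∑ i : Fin M, if (i : ℕ) < k then g (x i) else 0) = ∑ a ∈ F, g a := by
        intro β _ g
        rw [← Finset.sum_filter]
        refine Finset.sum_nbij' (fun i => x i) j ?_ ?_ ?_ ?_ ?_
        · intro i hi
          exact hxF i (by simpa using hi)
        · intro a ha
          simp only [Finset.mem_filter, Finset.mem_univ, true_and]
          have h1 : ((j a : Fin M) : ℕ) = ((e ⟨a, ha⟩ : Fin k) : ℕ) := by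
            rw [hj]; simp [ha]
          exact h1 ▸ (e ⟨a, ha⟩).2
        · intro i hi
          have h : (i : ℕ) < k := by simpa using hi
          have hmem : x i ∈ F := hxF i h
          have h4 : (⟨x i, hmem⟩ : {a // a ∈ F}) = e.symm ⟨(i : ℕ), h⟩ := by
            apply Subtype.ext
            show x i = ((e.symm ⟨(i : ℕ), h⟩ : {a // a ∈ F}) : stdSimplex ℝ S)
            simp only [hx]; rw [dif_pos h]
          apply Fin.ext
          rw [hj]; simp only [hmem, dif_pos]
          rw [h4, Equiv.apply_symm_apply]
        · intro a ha
          exact hjx a ha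
        · intro i _; rfl
      have hwmem : w ∈ stdSimplex ℝ (Fin M) := by
        constructor
        · intro i
          rw [hw]
          by_cases h : (i : ℕ) < k <;> simp [h, ENNReal.toReal_nonneg]
        · have := hbij (fun a => ((τ : Measure (stdSimplex ℝ S)) {a}).toReal)
          simp only [hw]
          rw [this, ← ENNReal.toReal_sum (fun a _ => measure_ne_top _ _),
            ← measure_finset_eq_sum, hF, ENNReal.toReal_one]
      have hphi : phiTM M hM (⟨w, hwmem⟩, x) = τ := by
        apply Subtype.ext
        apply Measure.ext
        intro A hA
        show (∑ i : Fin M, ENNReal.ofReal (w i) • Measure.dirac (x i)) A = _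
        rw [Measure.finset_sum_apply]
        have hterm : ∀ i : Fin M,
            (ENNReal.ofReal (w i) • Measure.dirac (x i)) A
              = if (i : ℕ) < k then
                  (τ : Measure (stdSimplex ℝ S)) {x i} * A.indicator 1 (x i) else 0 := by
          intro i
          rw [Measure.smul_apply, Measure.dirac_apply' _ hA, smul_eq_mul, hw]
          by_cases h : (i : ℕ) < k
          · simp [h, ENNReal.ofReal_toReal (measure_ne_top _ _)]
          · simp [h]
        simp only [hterm]
        rw [hbij (fun a => (τ : Measure (stdSimplex ℝ S)) {a} * A.indicator 1 a)]
        have hstep : ∑ a ∈ F, (τ : Measure (stdSimplex ℝ S)) {a} * A.indicator 1 a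
            = ∑ a ∈ F.filter (· ∈ A), (τ : Measure (stdSimplex ℝ S)) {a} := by
          rw [Finset.sum_filter]
          refine Finset.sum_congr rfl fun a _ => ?_
          by_cases h : a ∈ A <;> simp [Set.indicator_apply, h]
        rw [hstep, ← measure_finset_eq_sum]
        have hcoe : (↑(F.filter (· ∈ A)) : Set (stdSimplex ℝ S)) = A ∩ ↑F := by
          ext y; simp [and_comm]
        rw [hcoe]
        have hFmeas : MeasurableSet (↑F : Set (stdSimplex ℝ S)) :=
          F.finite_toSet.measurableSet
        have hdiff : (τ : Measure (stdSimplex ℝ S)) (A \ ↑F) = 0 := by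
          refine measure_mono_null (Set.diff_subset_compl A ↑F) ?_
          rw [measure_compl hFmeas (measure_ne_top _ _), hF, measure_univ, tsub_self]
        have := measure_inter_add_diff (μ := (τ : Measure (stdSimplex ℝ S))) A hFmeas
        rw [hdiff, add_zero] at this
        exact this
      refine ⟨(⟨w, hwmem⟩, x), ?_, hphi⟩
      intro s
      have hb := hbar s
      rw [← hphi,
        integral_phiTM M hM _ (f := fun ν : stdSimplex ℝ S => (ν : S → ℝ) s)
          ((continuous_apply s).comp continuous_subtype_val)] at hb
      exact hb
    · rintro ⟨p, hpK, rfl⟩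
      constructor
      · intro s
        rw [integral_phiTM M hM p (f := fun ν : stdSimplex ℝ S => (ν : S → ℝ) s)
          ((continuous_apply s).comp continuous_subtype_val)]
        exact hpK s
      · refine ⟨Finset.image p.2 Finset.univ, le_trans Finset.card_image_le (by simp), ?_⟩
        have hFmeas : MeasurableSet (↑(Finset.image p.2 Finset.univ) : Set (stdSimplex ℝ S)) :=
          (Finset.image p.2 Finset.univ).finite_toSet.measurableSet
        show (∑ i : Fin M, ENNReal.ofReal ((p.1 : Fin M → ℝ) i) • Measure.dirac (p.2 i))
            (↑(Finset.image p.2 Finset.univ)) = 1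
        rw [Measure.finset_sum_apply]
        have hterm : ∀ i : Fin M,
            (ENNReal.ofReal ((p.1 : Fin M → ℝ) i) • Measure.dirac (p.2 i))
              (↑(Finset.image p.2 Finset.univ) : Set (stdSimplex ℝ S))
            = ENNReal.ofReal ((p.1 : Fin M → ℝ) i) := by
          intro i
          rw [Measure.smul_apply, Measure.dirac_apply' _ hFmeas]
          have hm : p.2 i ∈ (↑(Finset.image p.2 Finset.univ) : Set (stdSimplex ℝ S)) := by simp
          rw [Set.indicator_of_mem hm]
          simp
        simp only [hterm]
        rw [← ENNReal.ofReal_sum_of_nonneg (fun i _ => (show 0 ≤ p.1 i from p.1.2.1 i)), (show ∑ i, p.1 i = 1 from p.1.2.2), ENNReal.ofReal_one]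
  rw [himage]
  exact hKcompact.image (continuous_phiTM M hM)
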